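/- Let f : ℝ² → ℂ and F be continuous functions satisfying f(x)·f(y)·f(z) = F(|x| + |y| + |z|, x + y + z) for all x, y, z ∈ ℝ². If f vanishes at one point then f vanishes everywhere. -/
import Mathlib


theorem wave_cubic_equation_vanishing
    (f : EuclideanSpace ℝ (Fin 2) → ℂ)
    (F : ℝ × EuclideanSpace ℝ (Fin 2) → ℂ)
    (hf : Continuous f)
    (hF : ContinuousOn F {p : ℝ × EuclideanSpace ℝ (Fin 2) | ‖p.2‖ ≤ p.1})
    (heq : ∀ x y z : EuclideanSpace ℝ (Fin 2),
      f x * f y * f z = F (‖x‖ + ‖y‖ + ‖z‖, x + y + z))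
    (hvan : ∃ x₀, f x₀ = 0) :
    ∀ x, f x = 0 := by
  -- Key identity: f(x/3)^3 = f(x) * f(0)^2
  have key : ∀ x : EuclideanSpace ℝ (Fin 2),
      f ((3:ℝ)⁻¹ • x) ^ 3 = f x * f 0 ^ 2 := by
    intro x
    have h1 := heq ((3:ℝ)⁻¹ • x) ((3:ℝ)⁻¹ • x) ((3:ℝ)⁻¹ • x)
    have h2 := heq x 0 0
    have hn : ‖(3:ℝ)⁻¹ • x‖ + ‖(3:ℝ)⁻¹ • x‖ + ‖(3:ℝ)⁻¹ • x‖
        = ‖x‖ + ‖(0:EuclideanSpace ℝ (Fin 2))‖ + ‖(0:EuclideanSpace ℝ (Fin 2))‖ := by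
      rw [norm_smul]
      simp [Real.norm_eq_abs]
      ring
    have hs : (3:ℝ)⁻¹ • x + (3:ℝ)⁻¹ • x + (3:ℝ)⁻¹ • x = x + 0 + 0 := by
      rw [← add_smul, ← add_smul]
      norm_num
    rw [hn, hs, ← h2] at h1
    calc f ((3:ℝ)⁻¹ • x) ^ 3 = f ((3:ℝ)⁻¹ • x) * f ((3:ℝ)⁻¹ • x) * f ((3:ℝ)⁻¹ • x) := by ring
      _ = f x * f 0 * f 0 := h1
      _ = f x * f 0 ^ 2 := by ring
  -- f 0 = 0
  have hf0 : f 0 = 0 := by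
    by_contra h0
    obtain ⟨x₀, hx₀⟩ := hvan
    have hseq : ∀ n : ℕ, f (((3:ℝ)⁻¹) ^ n • x₀) = 0 := by
      intro n
      induction n with
      | zero => simpa using hx₀
      | succ n ih =>
        have := key (((3:ℝ)⁻¹) ^ n • x₀)
        rw [ih, zero_mul] at this
        have h3 : f ((3:ℝ)⁻¹ • ((3:ℝ)⁻¹ ^ n • x₀)) = 0 := by
          exact pow_eq_zero_iff (n := 3) (by norm_num) |>.mp this
        rw [smul_smul] at h3
        rw [pow_succ]
        rw [mul_comm] at h3
        exact h3
    have htend : Filter.Tendsto (fun n : ℕ => ((3:ℝ)⁻¹) ^ n • x₀)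
        Filter.atTop (nhds 0) := by
      have : Filter.Tendsto (fun n : ℕ => ((3:ℝ)⁻¹) ^ n) Filter.atTop (nhds 0) :=
        tendsto_pow_atTop_nhds_zero_of_lt_one (by norm_num) (by norm_num)
      simpa using this.smul_const x₀
    have := (hf.continuousAt (x := 0)).tendsto.comp htend
    have hlim : Filter.Tendsto (fun n : ℕ => f (((3:ℝ)⁻¹) ^ n • x₀))
        Filter.atTop (nhds (f 0)) := this
    have hlim' : Filter.Tendsto (fun n : ℕ => f (((3:ℝ)⁻¹) ^ n • x₀))
        Filter.atTop (nhds 0) := by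
      have he : (fun n : ℕ => f (((3:ℝ)⁻¹) ^ n • x₀)) = fun _ => (0:ℂ) := funext hseq
      rw [he]; exact tendsto_const_nhds
    exact h0 (tendsto_nhds_unique hlim hlim')
  -- conclude
  intro x
  have := key ((3:ℝ) • x)
  rw [hf0] at this
  have hx : (3:ℝ)⁻¹ • ((3:ℝ) • x) = x := by
    rw [smul_smul]; norm_num
  rw [hx] at this
  simpa using pow_eq_zero_iff (n := 3) (by norm_num) |>.mp (by simpa using this)
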